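/- For every n ≥ 2, a revised ascent sequence of length n avoids the pattern 121 if and only if it avoids the pattern 211; consequently the number of 121-avoiding revised ascent sequences of length n equals Σ_{k=1}^{n−1} k^{n−k−1}. -/

import Mathlib

def IsEndo (n : ℕ) (x : Fin n → ℕ) : Prop := ∀ i, 1 ≤ x i ∧ x i ≤ n
def maxVal (n : ℕ) (x : Fin n → ℕ) : ℕ := Finset.univ.sup x
def IsCayley (n : ℕ) (x : Fin n → ℕ) : Prop :=
  IsEndo n x ∧ ∀ v, 1 ≤ v → v ≤ maxVal n x → ∃ i, x i = v
def Ascbot (n : ℕ) (x : Fin n → ℕ) : Set (Fin n) :=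
  {i | i.1 = 0 ∨ ∃ h : i.1 + 1 < n, x i < x ⟨i.1 + 1, h⟩}
def Nub (n : ℕ) (x : Fin n → ℕ) : Set (Fin n) :=
  {i | ∀ j, j < i → x j ≠ x i}
def IsRAS (n : ℕ) (x : Fin n → ℕ) : Prop :=
  IsCayley n x ∧ Ascbot n x = Nub n x
def Avoids121 (n : ℕ) (x : Fin n → ℕ) : Prop :=
  ¬ ∃ i j k : Fin n, i < j ∧ j < k ∧ x i < x j ∧ x i = x k
def Avoids211 (n : ℕ) (x : Fin n → ℕ) : Prop :=
  ¬ ∃ i j k : Fin n, i < j ∧ j < k ∧ x j < x i ∧ x j = x k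

namespace Stmt17

/-- The structural characterization. -/
def Char (n m : ℕ) (x : Fin n → ℕ) : Prop :=
  (∀ i, 1 ≤ x i ∧ x i ≤ m) ∧
  (∀ i : Fin n, i.1 = 0 → x i = m) ∧
  (∀ v, 1 ≤ v → v < m → ∃! i, x i = v) ∧
  (∀ i : Fin n, x i < m → ∃ h : i.1 + 1 < n, x i < x ⟨i.1 + 1, h⟩)

variable {n : ℕ}

lemma le_maxVal (x : Fin n → ℕ) (i : Fin n) : x i ≤ maxVal n x :=
  Finset.le_sup (Finset.mem_univ i)

lemma maxVal_attained (hn : 0 < n) (x : Fin n → ℕ) : ∃ i, x i = maxVal n x := by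
  obtain ⟨i, -, hi⟩ := Finset.exists_mem_eq_sup Finset.univ
    (Finset.univ_nonempty_iff.2 ⟨⟨0, hn⟩⟩) x
  exact ⟨i, hi.symm⟩

/-- In any RAS, the first entry is the maximum. -/
lemma ras_first (hn : 0 < n) (x : Fin n → ℕ) (hx : IsRAS n x) (i : Fin n) (hi : i.1 = 0) :
    x i = maxVal n x := by
  classical
  obtain ⟨p0, hp0⟩ := maxVal_attained hn x
  -- take the least index attaining the max
  have hne : (Finset.univ.filter (fun j : Fin n => x j = maxVal n x)).Nonempty :=
    ⟨p0, by simp [hp0]⟩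
  set s := Finset.univ.filter (fun j : Fin n => x j = maxVal n x) with hs
  obtain ⟨p, hp, hmin⟩ := s.exists_min_image id hne
  have hpx : x p = maxVal n x := (Finset.mem_filter.1 hp).2
  have hnub : p ∈ Nub n x := by
    intro j hj hji
    have : p ≤ j := hmin j (by simp [hs, hji, hpx])
    exact absurd hj (not_lt.2 this)
  have hasc : p ∈ Ascbot n x := by rw [hx.2]; exact hnub
  rcases hasc with h0 | ⟨h, hlt⟩
  · have : i = p := Fin.ext (by omega)
    rw [this, hpx]
  · exact absurd (le_maxVal x ⟨p.1+1, h⟩) (by omega)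

lemma char_maxVal (hn : 0 < n) {m : ℕ} {x : Fin n → ℕ} (hx : Char n m x) :
    maxVal n x = m := by
  have h1 : maxVal n x ≤ m := Finset.sup_le fun i _ => (hx.1 i).2
  have h2 : m ≤ maxVal n x := by
    have := hx.2.1 ⟨0, hn⟩ rfl
    calc m = x ⟨0, hn⟩ := this.symm
      _ ≤ _ := le_maxVal x _
  omega

/-- RAS + avoid 121 implies the characterization with m = maxVal. -/
lemma ras121_char (hn : 0 < n) (x : Fin n → ℕ) (hx : IsRAS n x) (ha : Avoids121 n x) :
    Char n (maxVal n x) x := by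
  classical
  set m := maxVal n x with hm
  have hfirst := ras_first hn x hx
  have huniq : ∀ v, 1 ≤ v → v < m → ∃! i, x i = v := by
    intro v hv1 hvm
    obtain ⟨i0, hi0⟩ := hx.1.2 v hv1 (le_of_lt hvm)
    have hne : (Finset.univ.filter (fun j : Fin n => x j = v)).Nonempty := ⟨i0, by simp [hi0]⟩
    obtain ⟨p, hp, hmin⟩ := (Finset.univ.filter (fun j : Fin n => x j = v)).exists_min_image id hne
    have hpx : x p = v := (Finset.mem_filter.1 hp).2
    refine ⟨p, hpx, ?_⟩
    intro q hq
    by_contra hqp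
    have hpq : p < q := lt_of_le_of_ne (hmin q (by simp [hq])) (fun h => hqp (Fin.ext (congrArg Fin.val h)).symm)
    have hnub : p ∈ Nub n x := fun j hj hji => absurd hj (not_lt.2 (hmin j (by simp [hji, hpx])))
    have hasc : p ∈ Ascbot n x := by rw [hx.2]; exact hnub
    rcases hasc with h0 | ⟨h, hlt⟩
    · have := hfirst p h0; omega
    · set p1 : Fin n := ⟨p.1+1, h⟩ with hp1
      have hp1q : p1 ≤ q := Fin.le_def.2 (by have : p.1 < q.1 := hpq; simp [hp1]; omega)
      rcases eq_or_lt_of_le hp1q with he | hl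
      · rw [he, hq] at hlt; omega
      · exact ha ⟨p, p1, q, Fin.lt_def.2 (by simp [hp1]), hl, by omega, by rw [hpx, hq]⟩
  refine ⟨fun i => ⟨(hx.1.1 i).1, le_maxVal x i⟩, hfirst, huniq, ?_⟩
  intro i hi
  have hv1 : 1 ≤ x i := (hx.1.1 i).1
  obtain ⟨p, hpx, hpu⟩ := huniq (x i) hv1 hi
  have hip : i = p := (hpu i rfl)
  have hnub : i ∈ Nub n x := by
    intro j hj hji
    have : j = p := hpu j hji
    rw [this, ← hip] at hj
    exact absurd hj (lt_irrefl i)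
  have hasc : i ∈ Ascbot n x := by rw [hx.2]; exact hnub
  rcases hasc with h0 | hgood
  · have := hfirst i h0; omega
  · exact hgood

/-- RAS + avoid 211 implies the characterization with m = maxVal. -/
lemma ras211_char (hn : 0 < n) (x : Fin n → ℕ) (hx : IsRAS n x) (ha : Avoids211 n x) :
    Char n (maxVal n x) x := by
  classical
  set m := maxVal n x with hm
  have hfirst := ras_first hn x hx
  have huniq : ∀ v, 1 ≤ v → v < m → ∃! i, x i = v := by
    intro v hv1 hvm
    obtain ⟨i0, hi0⟩ := hx.1.2 v hv1 (le_of_lt hvm)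
    refine ⟨i0, hi0, ?_⟩
    intro q hq
    by_contra hqi
    -- two distinct occurrences i0 ≠ q of v; 0 is neither (x 0 = m > v); (0, min, max) is a 211
    have hx0 : x ⟨0, hn⟩ = m := hfirst _ rfl
    have hq0 : 0 < q.1 := by
      rcases Nat.eq_zero_or_pos q.1 with h | h
      · have := hfirst q h; omega
      · exact h
    have hi00 : 0 < i0.1 := by
      rcases Nat.eq_zero_or_pos i0.1 with h | h
      · have := hfirst i0 h; omega
      · exact h
    rcases lt_or_gt_of_ne (fun h : q = i0 => hqi h) with hlt | hlt
    · exact ha ⟨⟨0, hn⟩, q, i0, Fin.lt_def.2 hq0, hlt, by rw [hq, hx0]; omega, by rw [hq, hi0]⟩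
    · exact ha ⟨⟨0, hn⟩, i0, q, Fin.lt_def.2 hi00, hlt, by rw [hi0, hx0]; omega, by rw [hi0, hq]⟩
  refine ⟨fun i => ⟨(hx.1.1 i).1, le_maxVal x i⟩, hfirst, huniq, ?_⟩
  intro i hi
  have hv1 : 1 ≤ x i := (hx.1.1 i).1
  obtain ⟨p, hpx, hpu⟩ := huniq (x i) hv1 hi
  have hip : i = p := (hpu i rfl)
  have hnub : i ∈ Nub n x := by
    intro j hj hji
    have : j = p := hpu j hji
    rw [this, ← hip] at hj
    exact absurd hj (lt_irrefl i)
  have hasc : i ∈ Ascbot n x := by rw [hx.2]; exact hnub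
  rcases hasc with h0 | hgood
  · have := hfirst i h0; omega
  · exact hgood

lemma char_m_pos (hn : 0 < n) {m : ℕ} {x : Fin n → ℕ} (hx : Char n m x) : 1 ≤ m := by
  have h0 := hx.2.1 ⟨0, hn⟩ rfl
  have := (hx.1 ⟨0, hn⟩).1
  omega

/-- Under Char, the last entry equals m. -/
lemma char_last (hn : 0 < n) {m : ℕ} {x : Fin n → ℕ} (hx : Char n m x) :
    x ⟨n - 1, by omega⟩ = m := by
  by_contra h
  have hlt : x ⟨n - 1, by omega⟩ < m := lt_of_le_of_ne (hx.1 _).2 h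
  obtain ⟨hb, -⟩ := hx.2.2.2 _ hlt
  have hv : ((⟨n - 1, by omega⟩ : Fin n) : ℕ) = n - 1 := rfl
  rw [hv] at hb
  omega

lemma char_ras (hn : 0 < n) {m : ℕ} {x : Fin n → ℕ} (hx : Char n m x) : IsRAS n x := by
  have hm1 : 1 ≤ m := char_m_pos hn hx
  -- m ≤ n : m occurs and all small values occur at distinct positions... we only need IsEndo: x i ≤ n.
  -- Show m ≤ n: the m-1 small values plus position 0... use the injection below? Simpler:
  -- positions of values 1..m-1 are distinct and none is 0, so m-1 ≤ n-1.
  have hinj : ∀ v ∈ Finset.Icc 1 (m-1), ∃ i : Fin n, x i = v := by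
    intro v hv
    simp only [Finset.mem_Icc] at hv
    obtain ⟨i, hi, -⟩ := hx.2.2.1 v hv.1 (by omega)
    exact ⟨i, hi⟩
  have hmn : m - 1 ≤ n - 1 := by
    classical
    set F : ℕ → Fin n := fun v => if h : ∃ i : Fin n, x i = v then h.choose else ⟨0, hn⟩ with hF
    have hFs : ∀ v ∈ Finset.Icc 1 (m-1), x (F v) = v := by
      intro v hv
      obtain ⟨i, hi⟩ := hinj v hv
      rw [hF]
      simp only []
      rw [dif_pos ⟨i, hi⟩]
      exact (Exists.choose_spec (⟨i, hi⟩ : ∃ i : Fin n, x i = v))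
    have := Finset.card_le_card_of_injOn F
      (s := Finset.Icc 1 (m-1)) (t := Finset.univ.filter (fun i : Fin n => i.1 ≠ 0))
      ?_ ?_
    · have h2 : (Finset.univ.filter (fun i : Fin n => i.1 ≠ 0)).card ≤ n - 1 := by
        have : (Finset.univ.filter (fun i : Fin n => i.1 ≠ 0)) ⊆ Finset.univ.erase ⟨0, hn⟩ := by
          intro a ha
          simp only [Finset.mem_filter] at ha
          refine Finset.mem_erase.2 ⟨fun h => ha.2 (congrArg Fin.val h), Finset.mem_univ a⟩
        calc _ ≤ (Finset.univ.erase (⟨0, hn⟩ : Fin n)).card := Finset.card_le_card this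
          _ = n - 1 := by rw [Finset.card_erase_of_mem (Finset.mem_univ _)]; simp
      simp only [Nat.card_Icc] at this
      omega
    · intro v hv
      have hch := hFs v hv
      simp only [Finset.mem_coe, Finset.mem_Icc] at hv
      simp only [Finset.mem_coe, Finset.mem_filter, Finset.mem_univ, true_and]
      intro h0
      have := hx.2.1 _ h0
      omega
    · intro a ha b hb hab
      have h1 := hFs a ha
      have h2 := hFs b hb
      rw [hab, h2] at h1
      exact h1.symm
  have hmln : m ≤ n := by omega
  constructor
  · constructor
    · exact fun i => ⟨(hx.1 i).1, le_trans (hx.1 i).2 hmln⟩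
    · intro v hv1 hvm
      rw [char_maxVal hn hx] at hvm
      rcases eq_or_lt_of_le hvm with he | hlt
      · exact ⟨⟨0, hn⟩, by rw [hx.2.1 ⟨0, hn⟩ rfl, he]⟩
      · obtain ⟨i, hi, -⟩ := hx.2.2.1 v hv1 hlt
        exact ⟨i, hi⟩
  · ext i
    constructor
    · -- Ascbot ⊆ Nub
      rintro (h0 | ⟨h, hlt⟩)
      · intro j hj
        have : j.1 < i.1 := hj
        omega
      · -- ascent: x i < x (i+1) ≤ m so x i < m, unique
        have him : x i < m := lt_of_lt_of_le hlt (hx.1 _).2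
        obtain ⟨p, hp, hpu⟩ := hx.2.2.1 (x i) (hx.1 i).1 him
        intro j hj hji
        have h1 : j = p := hpu j hji
        have h2 : i = p := hpu i rfl
        rw [h1, ← h2] at hj
        exact lt_irrefl i hj
    · -- Nub ⊆ Ascbot
      intro hnub
      rcases eq_or_lt_of_le (Nat.zero_le i.1) with h0 | hpos
      · exact Or.inl h0.symm
      · rcases eq_or_lt_of_le (hx.1 i).2 with he | hlt
        · -- x i = m; but x 0 = m and 0 < i: contradiction with Nub
          exfalso
          refine hnub ⟨0, by omega⟩ (Fin.lt_def.2 hpos) ?_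
          rw [hx.2.1 ⟨0, by omega⟩ rfl, he]
        · exact Or.inr (hx.2.2.2 i hlt)

lemma char_121 (hn : 0 < n) {m : ℕ} {x : Fin n → ℕ} (hx : Char n m x) : Avoids121 n x := by
  rintro ⟨i, j, k, hij, hjk, hlt, heq⟩
  have him : x i < m := lt_of_lt_of_le hlt (hx.1 j).2
  obtain ⟨p, -, hpu⟩ := hx.2.2.1 (x i) (hx.1 i).1 him
  have h1 : i = p := hpu i rfl
  have h2 : k = p := hpu k heq.symm
  rw [h1, ← h2] at hij
  exact absurd (hij.trans hjk) (lt_irrefl k)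

lemma char_211 (hn : 0 < n) {m : ℕ} {x : Fin n → ℕ} (hx : Char n m x) : Avoids211 n x := by
  rintro ⟨i, j, k, hij, hjk, hlt, heq⟩
  have hjm : x j < m := lt_of_lt_of_le hlt (hx.1 i).2
  obtain ⟨p, -, hpu⟩ := hx.2.2.1 (x j) (hx.1 j).1 hjm
  have h1 : j = p := hpu j rfl
  have h2 : k = p := hpu k heq.symm
  rw [h1, ← h2] at hjk
  exact lt_irrefl _ hjk

/-- m is in the right range. -/
lemma char_m_le (hn : 2 ≤ n) {m : ℕ} {x : Fin n → ℕ} (hx : Char n m x) : m ≤ n - 1 := by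
  classical
  have hn0 : 0 < n := by omega
  -- small values inject into positions ≠ 0 and ≠ n-1
  have hinj : ∀ v ∈ Finset.Icc 1 (m-1), ∃ i : Fin n, x i = v := by
    intro v hv
    simp only [Finset.mem_Icc] at hv
    obtain ⟨i, hi, -⟩ := hx.2.2.1 v hv.1 (by have := char_m_pos hn0 hx; omega)
    exact ⟨i, hi⟩
  set F : ℕ → Fin n := fun v => if h : ∃ i : Fin n, x i = v then h.choose else ⟨0, hn0⟩ with hF
  have hFs : ∀ v ∈ Finset.Icc 1 (m-1), x (F v) = v := by
    intro v hv
    obtain ⟨i, hi⟩ := hinj v hv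
    rw [hF]
    simp only []
    rw [dif_pos ⟨i, hi⟩]
    exact (Exists.choose_spec (⟨i, hi⟩ : ∃ i : Fin n, x i = v))
  have := Finset.card_le_card_of_injOn F
    (s := Finset.Icc 1 (m-1)) (t := (Finset.univ.erase (⟨0, hn0⟩ : Fin n)).erase ⟨n-1, by omega⟩)
    ?_ ?_
  · have h2 : ((Finset.univ.erase (⟨0, hn0⟩ : Fin n)).erase ⟨n-1, by omega⟩).card = n - 2 := by
      rw [Finset.card_erase_of_mem, Finset.card_erase_of_mem (Finset.mem_univ _)]
      · simp; omega
      · refine Finset.mem_erase.2 ⟨fun h => ?_, Finset.mem_univ _⟩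
        have := congrArg Fin.val h
        simp at this
        omega
    rw [h2, Nat.card_Icc] at this
    have := char_m_pos hn0 hx
    omega
  · intro v hv
    have hch := hFs v hv
    simp only [Finset.mem_coe, Finset.mem_Icc] at hv
    set i := F v with hi
    have hvm : v < m := by have := char_m_pos hn0 hx; omega
    refine Finset.mem_erase.2 ⟨?_, Finset.mem_erase.2 ⟨?_, Finset.mem_univ _⟩⟩
    · intro h
      have : x i = m := by rw [h]; exact char_last hn0 hx
      omega
    · intro h
      have : x i = m := hx.2.1 i (congrArg Fin.val h)
      omega
  · intro a ha b hb hab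
    have h1 := hFs a ha
    have h2 := hFs b hb
    rw [hab, h2] at h1; exact h1.symm


section Count

variable (n m : ℕ)

/-- lex order on (slot, value). -/
def lexlt (f : Fin (m-1) → Fin (n-m)) (w v : Fin (m-1)) : Prop :=
  f w < f v ∨ (f w = f v ∧ w < v)

instance (f : Fin (m-1) → Fin (n-m)) (w v : Fin (m-1)) : Decidable (lexlt n m f w v) := by
  unfold lexlt; infer_instance

/-- rank of v in the lex order. -/
def rnk (f : Fin (m-1) → Fin (n-m)) (v : Fin (m-1)) : ℕ :=
  (Finset.univ.filter (fun w => lexlt n m f w v)).card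

/-- position of value v+1 in the decoded sequence. -/
def pp (f : Fin (m-1) → Fin (n-m)) (v : Fin (m-1)) : ℕ :=
  1 + (f v).1 + rnk n m f v

noncomputable def decode (f : Fin (m-1) → Fin (n-m)) : Fin n → ℕ :=
  fun i => if h : ∃ v, pp n m f v = i.1 then h.choose.1 + 1 else m

variable {n m}

lemma lexlt_trans {f : Fin (m-1) → Fin (n-m)} {a b c : Fin (m-1)}
    (h1 : lexlt n m f a b) (h2 : lexlt n m f b c) : lexlt n m f a c := by
  rcases h1 with h1 | ⟨he1, hl1⟩ <;> rcases h2 with h2 | ⟨he2, hl2⟩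
  · exact Or.inl (h1.trans h2)
  · exact Or.inl (he2 ▸ h1)
  · exact Or.inl (he1 ▸ h2)
  · exact Or.inr ⟨he1.trans he2, hl1.trans hl2⟩

lemma lexlt_irrefl {f : Fin (m-1) → Fin (n-m)} (v : Fin (m-1)) : ¬ lexlt n m f v v := by
  rintro (h | ⟨-, h⟩) <;> exact lt_irrefl _ h

lemma lexlt_total {f : Fin (m-1) → Fin (n-m)} {w v : Fin (m-1)} (h : w ≠ v) :
    lexlt n m f w v ∨ lexlt n m f v w := by
  rcases lt_trichotomy (f w) (f v) with h1 | h1 | h1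
  · exact Or.inl (Or.inl h1)
  · rcases lt_or_gt_of_ne h with h2 | h2
    · exact Or.inl (Or.inr ⟨h1, h2⟩)
    · exact Or.inr (Or.inr ⟨h1.symm, h2⟩)
  · exact Or.inr (Or.inl h1)

lemma rnk_lt {f : Fin (m-1) → Fin (n-m)} {w v : Fin (m-1)} (h : lexlt n m f w v) :
    rnk n m f w < rnk n m f v := by
  classical
  apply Finset.card_lt_card
  constructor
  · intro a ha
    simp only [Finset.mem_filter, Finset.mem_univ, true_and] at ha ⊢
    exact lexlt_trans ha h
  · intro hsub
    have hw : w ∈ Finset.univ.filter (fun a => lexlt n m f a v) := by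
      simp only [Finset.mem_filter, Finset.mem_univ, true_and]; exact h
    have := hsub hw
    simp only [Finset.mem_filter, Finset.mem_univ, true_and] at this
    exact lexlt_irrefl w this

lemma pp_lt {f : Fin (m-1) → Fin (n-m)} {w v : Fin (m-1)} (h : lexlt n m f w v) :
    pp n m f w < pp n m f v := by
  have h1 : (f w).1 ≤ (f v).1 := by
    rcases h with h | ⟨he, -⟩
    · exact le_of_lt h
    · exact le_of_eq (congrArg Fin.val he)
  have h2 := rnk_lt h
  unfold pp; omega

lemma pp_inj {f : Fin (m-1) → Fin (n-m)} {w v : Fin (m-1)} (h : pp n m f w = pp n m f v) :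
    w = v := by
  by_contra hne
  rcases lexlt_total hne with hl | hl
  · exact absurd h (ne_of_lt (pp_lt hl))
  · exact absurd h.symm (ne_of_lt (pp_lt hl))

lemma rnk_le {f : Fin (m-1) → Fin (n-m)} (v : Fin (m-1)) : rnk n m f v ≤ m - 2 := by
  classical
  have h1 : (Finset.univ.filter (fun w => lexlt n m f w v)) ⊆ Finset.univ.erase v := by
    intro a ha
    simp only [Finset.mem_filter, Finset.mem_univ, true_and] at ha
    refine Finset.mem_erase.2 ⟨fun h => ?_, Finset.mem_univ _⟩
    exact lexlt_irrefl v (h ▸ ha)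
  have h2 := Finset.card_le_card h1
  rw [Finset.card_erase_of_mem (Finset.mem_univ _), Finset.card_univ, Fintype.card_fin] at h2
  unfold rnk
  omega

lemma pp_le (hmn : m < n) {f : Fin (m-1) → Fin (n-m)} (v : Fin (m-1)) :
    pp n m f v ≤ n - 2 := by
  have h1 : (f v).1 < n - m := (f v).2
  have h2 := rnk_le (f := f) v
  have h3 : v.1 < m - 1 := v.2
  unfold pp; omega

lemma pp_pos {f : Fin (m-1) → Fin (n-m)} (v : Fin (m-1)) : 1 ≤ pp n m f v := by
  unfold pp; omega

lemma decode_at_pp (hmn : m < n) (f : Fin (m-1) → Fin (n-m)) (v : Fin (m-1)) (i : Fin n)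
    (hi : i.1 = pp n m f v) : decode n m f i = v.1 + 1 := by
  unfold decode
  rw [dif_pos ⟨v, hi.symm⟩]
  have hch := (⟨v, hi.symm⟩ : ∃ w, pp n m f w = i.1).choose_spec
  have : (⟨v, hi.symm⟩ : ∃ w, pp n m f w = i.1).choose = v := pp_inj (by rw [hch, hi])
  rw [this]

lemma decode_eq_m (f : Fin (m-1) → Fin (n-m)) (i : Fin n)
    (hi : ¬ ∃ v, pp n m f v = i.1) : decode n m f i = m := by
  unfold decode
  rw [dif_neg hi]

lemma decode_cases (hmn : m < n) (f : Fin (m-1) → Fin (n-m)) (i : Fin n) :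
    (decode n m f i = m ∧ ¬ ∃ v, pp n m f v = i.1) ∨
    ∃ v, pp n m f v = i.1 ∧ decode n m f i = v.1 + 1 := by
  by_cases h : ∃ v, pp n m f v = i.1
  · obtain ⟨v, hv⟩ := h
    exact Or.inr ⟨v, hv, decode_at_pp hmn f v i hv.symm⟩
  · exact Or.inl ⟨decode_eq_m f i h, h⟩

lemma decode_char (hm1 : 1 ≤ m) (hmn : m < n) (f : Fin (m-1) → Fin (n-m)) :
    Char n m (decode n m f) := by
  have hn0 : 0 < n := by omega
  refine ⟨?_, ?_, ?_, ?_⟩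
  · intro i
    rcases decode_cases hmn f i with ⟨he, -⟩ | ⟨v, -, he⟩
    · omega
    · have : v.1 < m - 1 := v.2
      omega
  · intro i hi
    rcases decode_cases hmn f i with ⟨he, -⟩ | ⟨v, hv, -⟩
    · exact he
    · exfalso; have := pp_pos (f := f) v; omega
  · intro u hu1 hum
    set v : Fin (m-1) := ⟨u - 1, by omega⟩ with hv
    have hppv : pp n m f v ≤ n - 2 := pp_le hmn v
    set i : Fin n := ⟨pp n m f v, by omega⟩ with hi
    refine ⟨i, ?_, ?_⟩
    · show decode n m f i = u
      rw [decode_at_pp hmn f v i rfl]; simp [hv]; omega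
    intro j hj
    rcases decode_cases hmn f j with ⟨he, -⟩ | ⟨w, hw, he⟩
    · omega
    · have : w = v := by
        have : w.1 + 1 = u := by omega
        apply Fin.ext; simp [hv]; omega
      apply Fin.ext
      rw [← hw, this]
  · intro i hi
    rcases decode_cases hmn f i with ⟨he, -⟩ | ⟨v, hv, he⟩
    · omega
    · have hile : i.1 ≤ n - 2 := hv ▸ pp_le hmn v
      refine ⟨by omega, ?_⟩
      set i1 : Fin n := ⟨i.1 + 1, by omega⟩ with hi1
      rcases decode_cases hmn f i1 with ⟨he1, -⟩ | ⟨w, hw1, he1⟩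
      · have : v.1 < m - 1 := v.2
        omega
      · -- pp w = pp v + 1, show v < w
        have hpw : pp n m f w = pp n m f v + 1 := by
          rw [hw1]
          show i.1 + 1 = pp n m f v + 1
          omega
        have hlvw : lexlt n m f v w := by
          rcases eq_or_ne v w with h | h
          · exfalso; rw [h] at hpw; omega
          · rcases lexlt_total h with hl | hl
            · exact hl
            · exact absurd hpw (by have := pp_lt hl; omega)
        have hfw : (f v).1 ≤ (f w).1 := by
          rcases hlvw with h | ⟨h, -⟩
          · exact le_of_lt h
          · exact le_of_eq (congrArg Fin.val h)
        have hrk : rnk n m f v < rnk n m f w := rnk_lt hlvw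
        have hfeq : (f v).1 = (f w).1 := by unfold pp at hpw; omega
        have hvw : v < w := by
          rcases hlvw with h | ⟨-, h⟩
          · exact absurd (Fin.lt_def.1 h) (by omega)
          · exact h
        rw [he, he1]
        exact Nat.add_lt_add_right hvw 1

variable (n m) in
/-- position of the unique occurrence of value v+1. -/
noncomputable def posx (x : Fin n → ℕ) (v : Fin (m-1)) : ℕ :=
  if h : ∃ i : Fin n, x i = v.1 + 1 then h.choose.1 else 0

variable (n m) in
/-- number of m's strictly before position t. -/
def fcnt (x : Fin n → ℕ) (t : ℕ) : ℕ :=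
  (Finset.univ.filter (fun j : Fin n => j.1 < t ∧ x j = m)).card

variable (n m) in
noncomputable def encode (hmn : m < n) (x : Fin n → ℕ) (v : Fin (m-1)) : Fin (n-m) :=
  ⟨min (fcnt n m x (posx n m x v) - 1) (n - m - 1), by omega⟩

variable {x : Fin n → ℕ}

lemma val_small (v : Fin (m-1)) : v.1 + 1 < m := by have := v.2; omega

lemma posx_spec (hx : Char n m x) (v : Fin (m-1)) :
    ∃ h : posx n m x v < n, x ⟨posx n m x v, h⟩ = v.1 + 1 := by
  obtain ⟨i, hi, -⟩ := hx.2.2.1 (v.1+1) (by omega) (val_small v)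
  have hex : ∃ i : Fin n, x i = v.1 + 1 := ⟨i, hi⟩
  unfold posx
  rw [dif_pos hex]
  refine ⟨hex.choose.2, ?_⟩
  have := hex.choose_spec
  have he : (⟨hex.choose.1, hex.choose.2⟩ : Fin n) = hex.choose := rfl
  rw [he]
  exact this

lemma posx_uniq (hx : Char n m x) (v : Fin (m-1)) (i : Fin n) (hi : x i = v.1 + 1) :
    i.1 = posx n m x v := by
  obtain ⟨h, hs⟩ := posx_spec hx v
  obtain ⟨p, -, hpu⟩ := hx.2.2.1 (v.1+1) (by omega) (val_small v)
  have h1 : i = p := hpu i hi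
  have h2 : (⟨posx n m x v, h⟩ : Fin n) = p := hpu _ hs
  rw [h1, ← h2]

lemma posx_pos (hx : Char n m x) (v : Fin (m-1)) : 0 < posx n m x v := by
  obtain ⟨h, hs⟩ := posx_spec hx v
  rcases Nat.eq_zero_or_pos (posx n m x v) with h0 | h0
  · exfalso
    have := hx.2.1 ⟨posx n m x v, h⟩ h0
    have := val_small v
    omega
  · exact h0

lemma posx_le (hx : Char n m x) (hmn : m < n) (v : Fin (m-1)) : posx n m x v ≤ n - 2 := by
  obtain ⟨h, hs⟩ := posx_spec hx v
  rcases eq_or_ne (posx n m x v) (n-1) with h0 | h0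
  · exfalso
    have hl := char_last (show 0 < n by omega) hx
    have he2 : v.1 + 1 = m := by
      rw [← hs]
      have heq : (⟨posx n m x v, h⟩ : Fin n) = (⟨n - 1, by omega⟩ : Fin n) := Fin.ext h0
      rw [heq]
      exact hl
    have := val_small v
    omega
  · omega

lemma card_below (t : ℕ) (ht : t ≤ n) :
    (Finset.univ.filter (fun j : Fin n => j.1 < t)).card = t := by
  classical
  have := Finset.card_bij' (s := Finset.univ.filter (fun j : Fin n => j.1 < t))
    (t := (Finset.univ : Finset (Fin t)))
    (fun a ha => ⟨a.1, by simp only [Finset.mem_filter] at ha; exact ha.2⟩)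
    (fun b _ => ⟨b.1, by omega⟩)
    (fun a ha => Finset.mem_univ _)
    (fun b hb => by simp only [Finset.mem_filter, Finset.mem_univ, true_and]; exact b.2)
    (fun a ha => rfl) (fun b hb => rfl)
  rw [this, Finset.card_univ, Fintype.card_fin]

lemma fcnt_split (x : Fin n → ℕ) (t : ℕ) (ht : t ≤ n) :
    t = fcnt n m x t + (Finset.univ.filter (fun j : Fin n => j.1 < t ∧ ¬ x j = m)).card := by
  classical
  have h1 := Finset.card_filter_add_card_filter_not
    (s := Finset.univ.filter (fun j : Fin n => j.1 < t)) (p := fun j => x j = m)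
  rw [Finset.filter_filter, Finset.filter_filter, card_below t ht] at h1
  beta_reduce at h1
  unfold fcnt
  omega

lemma scnt_eq (hx : Char n m x) (t : ℕ) (ht : t ≤ n) :
    (Finset.univ.filter (fun j : Fin n => j.1 < t ∧ ¬ x j = m)).card
    = (Finset.univ.filter (fun w : Fin (m-1) => posx n m x w < t)).card := by
  classical
  refine Finset.card_bij'
    (fun j hj => (⟨x j - 1, by
      simp only [Finset.mem_filter, Finset.mem_univ, true_and] at hj
      have h1 := (hx.1 j).1
      have h2 := (hx.1 j).2
      omega⟩ : Fin (m-1)))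
    (fun w hw => (⟨posx n m x w, (posx_spec hx w).choose⟩ : Fin n)) ?_ ?_ ?_ ?_
  · intro j hj
    simp only [Finset.mem_filter, Finset.mem_univ, true_and] at hj ⊢
    have h1 := (hx.1 j).1
    have hup := posx_uniq hx ⟨x j - 1, by
      have h2 := (hx.1 j).2; omega⟩ j (by simp only []; omega)
    omega
  · intro w hw
    simp only [Finset.mem_filter, Finset.mem_univ, true_and] at hw ⊢
    obtain ⟨h, hs⟩ := posx_spec hx w
    refine ⟨hw, ?_⟩
    rw [hs]
    have := val_small w
    omega
  · intro j hj
    simp only [Finset.mem_filter, Finset.mem_univ, true_and] at hj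
    have h1 := (hx.1 j).1
    have hup := posx_uniq hx ⟨x j - 1, by
      have h2 := (hx.1 j).2; omega⟩ j (by simp only []; omega)
    exact Fin.ext (by simp only []; omega)
  · intro w hw
    obtain ⟨h, hs⟩ := posx_spec hx w
    apply Fin.ext
    simp only [hs]
    omega

lemma key_split (hx : Char n m x) (hmn : m < n) (v : Fin (m-1)) :
    posx n m x v = fcnt n m x (posx n m x v)
      + (Finset.univ.filter (fun w : Fin (m-1) => posx n m x w < posx n m x v)).card := by
  have ht : posx n m x v ≤ n := by have := posx_le hx hmn v; omega
  rw [← scnt_eq hx _ ht]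
  exact fcnt_split x _ ht

lemma fcnt_mono (x : Fin n → ℕ) {t t' : ℕ} (h : t ≤ t') : fcnt n m x t ≤ fcnt n m x t' := by
  classical
  apply Finset.card_le_card
  intro j hj
  simp only [Finset.mem_filter, Finset.mem_univ, true_and] at hj ⊢
  exact ⟨by omega, hj.2⟩

lemma fcnt_pos (hx : Char n m x) (hmn : m < n) (v : Fin (m-1)) :
    1 ≤ fcnt n m x (posx n m x v) := by
  classical
  rw [Nat.one_le_iff_ne_zero, ← Nat.pos_iff_ne_zero]
  apply Finset.card_pos.2
  refine ⟨⟨0, by omega⟩, ?_⟩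
  simp only [Finset.mem_filter, Finset.mem_univ, true_and]
  exact ⟨posx_pos hx v, hx.2.1 _ rfl⟩

lemma total_m (hx : Char n m x) (hmn : m < n) :
    (Finset.univ.filter (fun j : Fin n => x j = m)).card = n - m + 1 := by
  classical
  have h1 := Finset.card_filter_add_card_filter_not
    (s := (Finset.univ : Finset (Fin n))) (p := fun j => x j = m)
  rw [Finset.card_univ, Fintype.card_fin] at h1
  beta_reduce at h1
  have h2 : (Finset.univ.filter (fun j : Fin n => ¬ x j = m)).card = m - 1 := by
    rw [show (m - 1) = (Finset.univ : Finset (Fin (m-1))).card by rw [Finset.card_univ, Fintype.card_fin]]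
    refine Finset.card_bij'
      (s := Finset.univ.filter (fun j : Fin n => ¬ x j = m))
      (t := (Finset.univ : Finset (Fin (m-1))))
      (fun j hj => (⟨x j - 1, by
        simp only [Finset.mem_filter, Finset.mem_univ, true_and] at hj
        have := (hx.1 j).1; have := (hx.1 j).2; omega⟩ : Fin (m-1)))
      (fun w hw => (⟨posx n m x w, (posx_spec hx w).choose⟩ : Fin n)) ?_ ?_ ?_ ?_
    · intro j hj; exact Finset.mem_univ _
    · intro w hw
      simp only [Finset.mem_filter, Finset.mem_univ, true_and]
      obtain ⟨h, hs⟩ := posx_spec hx w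
      rw [hs]
      have := val_small w
      omega
    · intro j hj
      simp only [Finset.mem_filter, Finset.mem_univ, true_and] at hj
      have h1' := (hx.1 j).1
      have hup := posx_uniq hx ⟨x j - 1, by
        have := (hx.1 j).2; omega⟩ j (by simp only []; omega)
      exact Fin.ext (by simp only []; omega)
    · intro w hw
      obtain ⟨h, hs⟩ := posx_spec hx w
      apply Fin.ext
      simp only [hs]
      omega
  rw [h2] at h1
  have hm1 : 1 ≤ m := char_m_pos (show 0 < n by omega) hx
  omega

lemma fcnt_le (hx : Char n m x) (hmn : m < n) (v : Fin (m-1)) :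
    fcnt n m x (posx n m x v) ≤ n - m := by
  classical
  have hsub : (Finset.univ.filter (fun j : Fin n => j.1 < posx n m x v ∧ x j = m))
      ⊆ (Finset.univ.filter (fun j : Fin n => x j = m)).erase ⟨n-1, by omega⟩ := by
    intro j hj
    simp only [Finset.mem_filter, Finset.mem_univ, true_and] at hj
    refine Finset.mem_erase.2 ⟨?_, by simp only [Finset.mem_filter, Finset.mem_univ, true_and]; exact hj.2⟩
    intro h
    have := congrArg Fin.val h
    simp only [] at this
    have := posx_le hx hmn v
    omega
  have h1 := Finset.card_le_card hsub
  rw [Finset.card_erase_of_mem (by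
    simp only [Finset.mem_filter, Finset.mem_univ, true_and]
    exact char_last (by omega) hx), total_m hx hmn] at h1
  unfold fcnt
  omega

lemma encode_val (hx : Char n m x) (hmn : m < n) (v : Fin (m-1)) :
    (encode n m hmn x v).1 + 1 = fcnt n m x (posx n m x v) := by
  have h1 := fcnt_pos hx hmn v
  have h2 := fcnt_le hx hmn v
  show min (fcnt n m x (posx n m x v) - 1) (n - m - 1) + 1 = fcnt n m x (posx n m x v)
  omega

/-- RUN lemma: strictly increasing runs of small values. -/
lemma run_lemma (hx : Char n m x) :
    ∀ d (a b : Fin n), a.1 + d = b.1 →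
      (∀ t : Fin n, a.1 ≤ t.1 → t.1 ≤ b.1 → x t < m) → x a + d ≤ x b := by
  intro d
  induction d with
  | zero =>
    intro a b hab _
    have : a = b := Fin.ext (by omega)
    rw [this]
    omega
  | succ d ih =>
    intro a b hab hall
    have ha : x a < m := hall a le_rfl (by omega)
    obtain ⟨h1, hlt⟩ := hx.2.2.2 a ha
    have := ih ⟨a.1+1, h1⟩ b (by simp only []; omega)
      (fun t ht1 ht2 => hall t (by simp only [] at ht1; omega) ht2)
    omega

lemma same_fcnt_lt (hx : Char n m x) (hmn : m < n) {w v : Fin (m-1)}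
    (hf : fcnt n m x (posx n m x w) = fcnt n m x (posx n m x v))
    (hp : posx n m x w < posx n m x v) : w < v := by
  classical
  obtain ⟨haw, hsw⟩ := posx_spec hx w
  obtain ⟨hav, hsv⟩ := posx_spec hx v
  have hall : ∀ t : Fin n, posx n m x w ≤ t.1 → t.1 ≤ posx n m x v → x t < m := by
    intro t ht1 ht2
    rcases eq_or_lt_of_le ht2 with he | hl
    · have : t = ⟨posx n m x v, hav⟩ := Fin.ext he
      rw [this, hsv]
      exact val_small v
    · rcases eq_or_lt_of_le (hx.1 t).2 with he2 | hl2
      · -- x t = m with pw ≤ t < pv : contradiction with equal fcnt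
        exfalso
        have hss : (Finset.univ.filter (fun j : Fin n => j.1 < posx n m x w ∧ x j = m))
            ⊂ (Finset.univ.filter (fun j : Fin n => j.1 < posx n m x v ∧ x j = m)) := by
          constructor
          · intro j hj
            simp only [Finset.mem_filter, Finset.mem_univ, true_and] at hj ⊢
            exact ⟨by omega, hj.2⟩
          · intro hsub
            have ht : t ∈ Finset.univ.filter (fun j : Fin n => j.1 < posx n m x v ∧ x j = m) := by
              simp only [Finset.mem_filter, Finset.mem_univ, true_and]
              exact ⟨hl, he2⟩
            have := hsub ht
            simp only [Finset.mem_filter, Finset.mem_univ, true_and] at this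
            omega
        have := Finset.card_lt_card hss
        unfold fcnt at hf
        omega
      · exact hl2
  have := run_lemma hx (posx n m x v - posx n m x w) ⟨posx n m x w, haw⟩ ⟨posx n m x v, hav⟩
    (by simp only []; omega) (by
      intro t ht1 ht2
      simp only [] at ht1 ht2
      exact hall t ht1 ht2)
  rw [hsw, hsv] at this
  exact Fin.lt_def.2 (by omega)

lemma posx_lt_iff (hx : Char n m x) (hmn : m < n) (w v : Fin (m-1)) :
    posx n m x w < posx n m x v ↔ lexlt n m (encode n m hmn x) w v := by
  rcases eq_or_ne w v with rfl | hne
  · constructor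
    · intro h; exact absurd h (lt_irrefl _)
    · intro h; exact absurd h (lexlt_irrefl w)
  have hew := encode_val hx hmn w
  have hev := encode_val hx hmn v
  constructor
  · intro hp
    have hf : fcnt n m x (posx n m x w) ≤ fcnt n m x (posx n m x v) := fcnt_mono x (le_of_lt hp)
    rcases eq_or_lt_of_le hf with he | hl
    · exact Or.inr ⟨Fin.ext (by omega), same_fcnt_lt hx hmn he hp⟩
    · exact Or.inl (Fin.lt_def.2 (by omega))
  · intro hl
    rcases hl with hl | ⟨he, hwv⟩
    · have hf : fcnt n m x (posx n m x w) < fcnt n m x (posx n m x v) := by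
        have := Fin.lt_def.1 hl; omega
      by_contra hnp
      have := fcnt_mono (m := m) x (not_lt.1 hnp)
      omega
    · have hf : fcnt n m x (posx n m x w) = fcnt n m x (posx n m x v) := by
        have := congrArg Fin.val he; omega
      rcases lt_trichotomy (posx n m x w) (posx n m x v) with h | h | h
      · exact h
      · exfalso
        obtain ⟨haw, hsw⟩ := posx_spec hx w
        obtain ⟨hav, hsv⟩ := posx_spec hx v
        have : (⟨posx n m x w, haw⟩ : Fin n) = ⟨posx n m x v, hav⟩ := Fin.ext h
        rw [this, hsv] at hsw
        exact hne (Fin.ext (by omega))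
      · exact absurd (same_fcnt_lt hx hmn hf.symm h) (by omega)

lemma posx_eq_pp (hx : Char n m x) (hmn : m < n) (v : Fin (m-1)) :
    posx n m x v = pp n m (encode n m hmn x) v := by
  classical
  have h1 := key_split hx hmn v
  have h2 : (Finset.univ.filter (fun w : Fin (m-1) => posx n m x w < posx n m x v))
      = Finset.univ.filter (fun w => lexlt n m (encode n m hmn x) w v) := by
    apply Finset.filter_congr
    intro w _
    exact posx_lt_iff hx hmn w v
  rw [h2] at h1
  have h3 := encode_val hx hmn v
  unfold pp rnk
  omega

lemma encode_inj (hmn : m < n) {y : Fin n → ℕ} (hx : Char n m x) (hy : Char n m y)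
    (he : encode n m hmn x = encode n m hmn y) : x = y := by
  have hp : ∀ v, posx n m x v = posx n m y v := by
    intro v
    rw [posx_eq_pp hx hmn, posx_eq_pp hy hmn, he]
  have hsmall : ∀ z w : Fin n → ℕ, Char n m z → Char n m w →
      (∀ v, posx n m z v = posx n m w v) → ∀ i : Fin n, ¬ z i = m → z i = w i := by
    intro z w hz hw hzw i hi
    have h1 := (hz.1 i).1
    have h2 := (hz.1 i).2
    set v : Fin (m-1) := ⟨z i - 1, by omega⟩ with hv
    have hzi : z i = v.1 + 1 := by simp only [hv]; omega
    have hpv := posx_uniq hz v i hzi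
    obtain ⟨hb, hs⟩ := posx_spec hw v
    have : i = ⟨posx n m w v, hb⟩ := Fin.ext (hpv.trans (hzw v))
    rw [this, hs, ← hzi, this]
  funext i
  by_cases hxi : x i = m
  · by_cases hyi : y i = m
    · rw [hxi, hyi]
    · exact absurd ((hsmall y x hy hx (fun v => (hp v).symm) i hyi).trans hxi) hyi
  · exact hsmall x y hx hy hp i hxi

lemma encode_decode (hm1 : 1 ≤ m) (hmn : m < n) (f : Fin (m-1) → Fin (n-m)) :
    encode n m hmn (decode n m f) = f := by
  classical
  have hc : Char n m (decode n m f) := decode_char hm1 hmn f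
  have hpp : ∀ v, posx n m (decode n m f) v = pp n m f v := by
    intro v
    have := posx_uniq hc v ⟨pp n m f v, by have := pp_le hmn (f := f) v; omega⟩
      (decode_at_pp hmn f v _ rfl)
    exact this.symm
  funext v
  have hks := key_split hc hmn v
  rw [hpp v] at hks
  have hfe : (Finset.univ.filter (fun w : Fin (m-1) => posx n m (decode n m f) w < pp n m f v))
      = Finset.univ.filter (fun w => lexlt n m f w v) := by
    apply Finset.filter_congr
    intro w _
    rw [hpp w]
    constructor
    · intro h
      rcases eq_or_ne w v with rfl | hne
      · exact absurd h (lt_irrefl _)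
      · rcases lexlt_total hne with hl | hl
        · exact hl
        · exact absurd (pp_lt hl) (by omega)
    · intro h
      exact pp_lt h
  rw [hfe] at hks
  have hev := encode_val hc hmn v
  rw [hpp v] at hev
  have hppv : pp n m f v = 1 + (f v).1 + rnk n m f v := rfl
  have hfv : (f v).1 ≤ n - m - 1 := by have := (f v).2; omega
  apply Fin.ext
  unfold rnk at hppv
  omega

lemma char_finite : {x : Fin n → ℕ | Char n m x}.Finite := by
  apply Set.Finite.subset (Set.Finite.pi (fun _ : Fin n => Set.finite_Icc 0 m))
  intro x hx
  simp only [Set.mem_pi, Set.mem_univ, Set.mem_Icc, forall_true_left]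
  exact fun i => ⟨Nat.zero_le _, (hx.1 i).2⟩

lemma char_ncard (hm1 : 1 ≤ m) (hmn : m < n) :
    {x : Fin n → ℕ | Char n m x}.ncard = (n - m) ^ (m - 1) := by
  classical
  have hfin : {x : Fin n → ℕ | Char n m x}.Finite := char_finite
  have hBfin : (Set.univ : Set (Fin (m-1) → Fin (n-m))).Finite := Set.finite_univ
  have le1 : {x : Fin n → ℕ | Char n m x}.ncard ≤
      (Set.univ : Set (Fin (m-1) → Fin (n-m))).ncard := by
    apply Set.ncard_le_ncard_of_injOn (encode n m hmn) (fun a _ => Set.mem_univ _) _ hBfin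
    intro a ha b hb he
    exact encode_inj hmn ha hb he
  have le2 : (Set.univ : Set (Fin (m-1) → Fin (n-m))).ncard ≤
      {x : Fin n → ℕ | Char n m x}.ncard := by
    apply Set.ncard_le_ncard_of_injOn (decode n m) (fun f _ => by exact decode_char hm1 hmn f) _ hfin
    intro a _ b _ he
    rw [← encode_decode hm1 hmn a, ← encode_decode hm1 hmn b, he]
  have hB : (Set.univ : Set (Fin (m-1) → Fin (n-m))).ncard = (n - m) ^ (m - 1) := by
    rw [Set.ncard_univ, Nat.card_eq_fintype_card, Fintype.card_fun, Fintype.card_fin,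
      Fintype.card_fin]
  omega

end Count
lemma ncard_biUnion {α ι : Type*} (t : Finset ι) (s : ι → Set α)
    (hfin : ∀ i ∈ t, (s i).Finite)
    (hdisj : ∀ i ∈ t, ∀ j ∈ t, i ≠ j → Disjoint (s i) (s j)) :
    (⋃ i ∈ t, s i).ncard = ∑ i ∈ t, (s i).ncard := by
  classical
  induction t using Finset.induction with
  | empty => simp
  | @insert a t' ha ih =>
    rw [Finset.set_biUnion_insert, Finset.sum_insert ha,
      Set.ncard_union_eq ?_ (hfin a (Finset.mem_insert_self a t')) ?_,
      ih (fun i hi => hfin i (Finset.mem_insert_of_mem hi))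
        (fun i hi j hj hij => hdisj i (Finset.mem_insert_of_mem hi) j (Finset.mem_insert_of_mem hj) hij)]
    · rw [Set.disjoint_iUnion_right]
      intro i
      rw [Set.disjoint_iUnion_right]
      intro hi
      exact hdisj a (Finset.mem_insert_self a t') i (Finset.mem_insert_of_mem hi)
        (fun h => ha (h ▸ hi))
    · exact Set.Finite.biUnion t'.finite_toSet (fun i hi => hfin i (Finset.mem_insert_of_mem hi))

lemma set_eq (hn : 2 ≤ n) :
    {x : Fin n → ℕ | IsRAS n x ∧ Avoids121 n x}
      = ⋃ m ∈ Finset.Icc 1 (n-1), {x : Fin n → ℕ | Char n m x} := by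
  ext x
  simp only [Set.mem_setOf_eq, Set.mem_iUnion, Finset.mem_Icc, exists_prop]
  constructor
  · rintro ⟨h1, h2⟩
    have hc := ras121_char (by omega) x h1 h2
    exact ⟨maxVal n x, ⟨char_m_pos (by omega) hc, char_m_le hn hc⟩, hc⟩
  · rintro ⟨m, -, hc⟩
    exact ⟨char_ras (by omega) hc, char_121 (by omega) hc⟩

end Stmt17

theorem stmt17 (n : ℕ) (hn : 2 ≤ n) :
    (∀ x : Fin n → ℕ, IsRAS n x → (Avoids121 n x ↔ Avoids211 n x)) ∧
    {x : Fin n → ℕ | IsRAS n x ∧ Avoids121 n x}.ncard =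
      ∑ k ∈ Finset.Icc 1 (n - 1), k ^ (n - k - 1) := by
  classical
  constructor
  · intro x hras
    constructor
    · intro h121
      exact Stmt17.char_211 (by omega) (Stmt17.ras121_char (by omega) x hras h121)
    · intro h211
      exact Stmt17.char_121 (by omega) (Stmt17.ras211_char (by omega) x hras h211)
  · rw [Stmt17.set_eq hn,
      Stmt17.ncard_biUnion _ _ (fun m _ => Stmt17.char_finite)
        (fun i hi j hj hij => ?_)]
    · rw [Finset.sum_congr rfl (fun m hm => Stmt17.char_ncard
        (by simp only [Finset.mem_Icc] at hm; omega)
        (by simp only [Finset.mem_Icc] at hm; omega))]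
      refine Finset.sum_nbij' (i := fun m => n - m) (j := fun k => n - k) ?_ ?_ ?_ ?_ ?_
      · intro a ha; simp only [Finset.mem_Icc] at ha ⊢; omega
      · intro a ha; simp only [Finset.mem_Icc] at ha ⊢; omega
      · intro a ha; simp only [Finset.mem_Icc] at ha; show n - (n - a) = a; omega
      · intro a ha; simp only [Finset.mem_Icc] at ha; show n - (n - a) = a; omega
      · intro a ha
        simp only [Finset.mem_Icc] at ha
        show (n - a) ^ (a - 1) = (n - a) ^ (n - (n - a) - 1)
        congr 1
        omega
    · rw [Set.disjoint_left]
      intro x hxi hxj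
      have h1 := Stmt17.char_maxVal (show 0 < n by omega) (Set.mem_setOf_eq ▸ hxi)
      have h2 := Stmt17.char_maxVal (show 0 < n by omega) (Set.mem_setOf_eq ▸ hxj)
      exact hij (h1 ▸ h2 ▸ rfl)
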